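/- Let f : ℝⁿ → ℝⁿ be continuously differentiable with f' Lipschitz with constant L on an open convex set Ω containing x*, x, y with y ≠ x, and set s = y - x and z = f(y) - f(x). Then ‖z - f'(x*) s‖ ≤ (L/2)(‖y - x*‖ + ‖x - x*‖)‖s‖. -/

import Mathlib

open Metric

theorem stmt_12 {n : ℕ} (Ω : Set (EuclideanSpace ℝ (Fin n))) (hΩ : IsOpen Ω)
    (hconv : Convex ℝ Ω)
    (f : EuclideanSpace ℝ (Fin n) → EuclideanSpace ℝ (Fin n))
    (f' : EuclideanSpace ℝ (Fin n) → EuclideanSpace ℝ (Fin n) →L[ℝ] EuclideanSpace ℝ (Fin n))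
    (hdiff : ∀ u ∈ Ω, HasFDerivAt f (f' u) u)
    (hcont : ContinuousOn f' Ω)
    (L : ℝ) (hL : 0 < L)
    (hLip : ∀ u ∈ Ω, ∀ v ∈ Ω, ‖f' u - f' v‖ ≤ L * ‖u - v‖)
    (xs x y : EuclideanSpace ℝ (Fin n)) (hxs : xs ∈ Ω) (hx : x ∈ Ω) (hy : y ∈ Ω)
    (hne : y ≠ x) (s z : EuclideanSpace ℝ (Fin n))
    (hsdef : s = y - x) (hzdef : z = f y - f x) :
    ‖z - f' xs s‖ ≤ L / 2 * (‖y - xs‖ + ‖x - xs‖) * ‖s‖ := by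
  subst hsdef hzdef
  set a := ‖y - xs‖ with ha
  set b := ‖x - xs‖ with hb
  set c := ‖y - x‖ with hc
  have hmem : ∀ t ∈ Set.Icc (0:ℝ) 1, x + t • (y - x) ∈ Ω := by
    intro t ht
    have h : x + t • (y - x) = (1 - t) • x + t • y := by module
    rw [h]
    exact hconv hx hy (by linarith [ht.2]) ht.1 (by ring)
  have hderiv : ∀ t ∈ Set.uIcc (0:ℝ) 1,
      HasDerivAt (fun t : ℝ => f (x + t • (y - x)) - t • (f' xs (y - x)))
        (f' (x + t • (y - x)) (y - x) - f' xs (y - x)) t := by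
    intro t ht
    rw [Set.uIcc_of_le zero_le_one] at ht
    have hline : HasDerivAt (fun t : ℝ => x + t • (y - x)) (y - x) t := by
      simpa using ((hasDerivAt_id t).smul_const (y - x)).const_add x
    have h1 := (hdiff _ (hmem t ht)).comp_hasDerivAt t hline
    have h2 : HasDerivAt (fun t : ℝ => t • (f' xs (y - x))) (f' xs (y - x)) t := by
      simpa using (hasDerivAt_id t).smul_const (f' xs (y - x))
    exact h1.sub h2
  have hcontpath : ContinuousOn
      (fun t : ℝ => f' (x + t • (y - x)) (y - x) - f' xs (y - x)) (Set.Icc 0 1) := by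
    have h1 : ContinuousOn (fun t : ℝ => f' (x + t • (y - x))) (Set.Icc 0 1) :=
      hcont.comp ((continuous_const.add (continuous_id.smul continuous_const)) :
          Continuous fun t : ℝ => x + t • (y - x)).continuousOn
        (fun t ht => hmem t ht)
    exact (((ContinuousLinearMap.apply ℝ (EuclideanSpace ℝ (Fin n)) (y - x)).continuous.comp_continuousOn
      h1)).sub continuousOn_const
  have hint : IntervalIntegrable
      (fun t : ℝ => f' (x + t • (y - x)) (y - x) - f' xs (y - x))
      MeasureTheory.volume 0 1 := by
    apply ContinuousOn.intervalIntegrable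
    rwa [Set.uIcc_of_le zero_le_one]
  have key : f y - f x - f' xs (y - x)
      = ∫ t in (0:ℝ)..1, (f' (x + t • (y - x)) (y - x) - f' xs (y - x)) := by
    rw [intervalIntegral.integral_eq_sub_of_hasDerivAt hderiv hint]
    have e1 : x + (1:ℝ) • (y - x) = y := by module
    have e2 : x + (0:ℝ) • (y - x) = x := by module
    rw [e1, e2, zero_smul, one_smul]
    abel
  have hbnd : ∀ t ∈ Set.Icc (0:ℝ) 1,
      ‖f' (x + t • (y - x)) (y - x) - f' xs (y - x)‖ ≤ L * (t * a + (1 - t) * b) * c := by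
    intro t ht
    have h1 : ‖f' (x + t • (y - x)) (y - x) - f' xs (y - x)‖
        ≤ ‖f' (x + t • (y - x)) - f' xs‖ * c := by
      have h0 := (f' (x + t • (y - x)) - f' xs).le_opNorm (y - x)
      rwa [ContinuousLinearMap.sub_apply] at h0
    have h2 := hLip _ (hmem t ht) xs hxs
    have h3 : ‖x + t • (y - x) - xs‖ ≤ t * a + (1 - t) * b := by
      have heq : x + t • (y - x) - xs = t • (y - xs) + (1 - t) • (x - xs) := by module
      rw [heq]
      calc ‖t • (y - xs) + (1 - t) • (x - xs)‖
          ≤ ‖t • (y - xs)‖ + ‖(1 - t) • (x - xs)‖ := norm_add_le _ _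
        _ = t * a + (1 - t) * b := by
            rw [norm_smul, norm_smul, Real.norm_of_nonneg ht.1,
              Real.norm_of_nonneg (by linarith [ht.2])]
    calc ‖f' (x + t • (y - x)) (y - x) - f' xs (y - x)‖
        ≤ ‖f' (x + t • (y - x)) - f' xs‖ * c := h1
      _ ≤ (L * (t * a + (1 - t) * b)) * c := by
          apply mul_le_mul_of_nonneg_right _ (norm_nonneg _)
          exact le_trans h2 (mul_le_mul_of_nonneg_left h3 hL.le)
      _ = L * (t * a + (1 - t) * b) * c := by ring
  have hbint : IntervalIntegrable (fun t : ℝ => L * (t * a + (1 - t) * b) * c)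
      MeasureTheory.volume 0 1 := by
    exact Continuous.intervalIntegrable (by fun_prop) 0 1
  have hnorm : ‖∫ t in (0:ℝ)..1, (f' (x + t • (y - x)) (y - x) - f' xs (y - x))‖
      ≤ |∫ t in (0:ℝ)..1, L * (t * a + (1 - t) * b) * c| := by
    apply intervalIntegral.norm_integral_le_abs_of_norm_le ?_ hbint
    rw [Set.uIoc_of_le zero_le_one]
    exact (MeasureTheory.ae_restrict_iff' measurableSet_Ioc).2
      (Filter.Eventually.of_forall fun t ht => hbnd t (Set.Ioc_subset_Icc_self ht))
  have hval : (∫ t in (0:ℝ)..1, L * (t * a + (1 - t) * b) * c) = L / 2 * (a + b) * c := by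
    have h : ∀ t : ℝ, L * (t * a + (1 - t) * b) * c = (L * c * (a - b)) * t + L * b * c :=
      fun t => by ring
    simp_rw [h]
    rw [intervalIntegral.integral_add
      (Continuous.intervalIntegrable (by fun_prop : Continuous fun t : ℝ => L * c * (a - b) * t) 0 1)
      (intervalIntegrable_const), intervalIntegral.integral_const_mul, integral_id,
      intervalIntegral.integral_const]
    simp
    ring
  rw [key]
  calc ‖∫ t in (0:ℝ)..1, (f' (x + t • (y - x)) (y - x) - f' xs (y - x))‖
      ≤ |∫ t in (0:ℝ)..1, L * (t * a + (1 - t) * b) * c| := hnorm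
    _ = |L / 2 * (a + b) * c| := by rw [hval]
    _ = L / 2 * (a + b) * c := abs_of_nonneg (by positivity)
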